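/- Let μ ∈ ℝ, σ > 0, σₙ > 0, set S = σ² + σₙ², K = σ²/S, σ₊² = σ²σₙ²/S, and for y ∈ ℝ let μ⁺(y) = μ + K·(y − μ). Then the expectation over y ~ N(μ, S) of the univariate Gaussian KL divergence from N(μ⁺(y), σ₊²) to N(μ, σ²) satisfies ∫ (1/2)·[σ₊²/σ² + (μ⁺(y) − μ)²/σ² − 1 + log(σ²/σ₊²)] d(N(μ, S))(y) = (1/2)·log(1 + σ²/σₙ²). -/

import Mathlib

open MeasureTheory ProbabilityTheory Real
open scoped NNReal ENNReal

lemma my_integrable_sq_mul_exp {b : ℝ} (hb : 0 < b) :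
    Integrable fun x : ℝ => x ^ 2 * Real.exp (-b * x ^ 2) := by
  have h := integrable_rpow_mul_exp_neg_mul_sq hb (s := 2) (by norm_num)
  simpa [Real.rpow_natCast] using h

lemma my_integral_sq_mul_exp {b : ℝ} (hb : 0 < b) :
    ∫ x : ℝ, x ^ 2 * Real.exp (-b * x ^ 2) = Real.sqrt (π / b) / (2 * b) := by
  have hu : ∀ x : ℝ, HasDerivAt (fun x : ℝ => x) ((fun _ : ℝ => (1:ℝ)) x) x :=
    fun x => hasDerivAt_id x
  have hv : ∀ x : ℝ, HasDerivAt (fun x : ℝ => -(1/(2*b)) * Real.exp (-b * x ^ 2))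
      ((fun x : ℝ => x * Real.exp (-b * x ^ 2)) x) x := by
    intro x
    have h1 : HasDerivAt (fun x : ℝ => -b * x ^ 2) (-b * (2 * x)) x := by
      simpa using (hasDerivAt_pow 2 x).const_mul (-b)
    have h2 := h1.exp.const_mul (-(1/(2*b)))
    refine h2.congr_deriv ?_
    field_simp
  have huv' : Integrable ((fun x : ℝ => x) * fun x : ℝ => x * Real.exp (-b * x ^ 2)) := by
    have := my_integrable_sq_mul_exp hb
    apply this.congr
    filter_upwards with x
    simp [Pi.mul_apply]; ring
  have hu'v : Integrable ((fun _ : ℝ => (1:ℝ)) * fun x : ℝ =>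
      -(1/(2*b)) * Real.exp (-b * x ^ 2)) := by
    have := (integrable_exp_neg_mul_sq hb).const_mul (-(1/(2*b)))
    apply this.congr
    filter_upwards with x
    simp [Pi.mul_apply]
  have huv : Integrable ((fun x : ℝ => x) * fun x : ℝ =>
      -(1/(2*b)) * Real.exp (-b * x ^ 2)) := by
    have := (integrable_mul_exp_neg_mul_sq hb).const_mul (-(1/(2*b)))
    apply this.congr
    filter_upwards with x
    simp [Pi.mul_apply]; ring
  have key := MeasureTheory.integral_mul_deriv_eq_deriv_mul_of_integrable (fun x _ => hu x) (fun x _ => hv x) huv' hu'v huv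
  have hL : ∫ x : ℝ, x * (x * Real.exp (-b * x ^ 2)) = ∫ x : ℝ, x ^ 2 * Real.exp (-b * x ^ 2) := by
    congr 1; ext x; ring
  have hR : ∫ x : ℝ, (1:ℝ) * (-(1/(2*b)) * Real.exp (-b * x ^ 2))
      = -(1/(2*b)) * Real.sqrt (π / b) := by
    simp_rw [one_mul]
    rw [MeasureTheory.integral_const_mul, integral_gaussian]
  rw [hL, hR] at key
  rw [key]
  ring

lemma my_gaussian_integral_eq (μ : ℝ) {v : ℝ≥0} (hv : v ≠ 0) (g : ℝ → ℝ) :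
    ∫ y, g y ∂(gaussianReal μ v) = ∫ y, gaussianPDFReal μ v y * g y := by
  rw [gaussianReal_of_var_ne_zero _ hv, gaussianPDF_def]
  have h : ∀ x : ℝ, ENNReal.ofReal (gaussianPDFReal μ v x)
      = ((gaussianPDFReal μ v x).toNNReal : ℝ≥0∞) := fun _ => rfl
  simp_rw [h]
  rw [integral_withDensity_eq_integral_smul (measurable_gaussianPDFReal μ v).real_toNNReal g]
  congr 1; ext x
  rw [NNReal.smul_def, smul_eq_mul, Real.coe_toNNReal _ (gaussianPDFReal_nonneg μ v x)]

lemma my_integral_sub_sq (μ : ℝ) {v : ℝ} (hv : 0 < v) :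
    ∫ y, (y - μ) ^ 2 ∂(gaussianReal μ v.toNNReal) = v := by
  have hv' : v.toNNReal ≠ 0 := by
    simp only [ne_eq, Real.toNNReal_eq_zero, not_le]; exact hv
  rw [my_gaussian_integral_eq μ hv']
  have hcoe : ((v.toNNReal : ℝ)) = v := Real.coe_toNNReal _ hv.le
  have hS : Real.sqrt (2 * π * v) ≠ 0 := by positivity
  have hshift := MeasureTheory.integral_add_right_eq_self (μ := volume)
    (fun y => (Real.sqrt (2 * π * v))⁻¹ * Real.exp (-(y - μ)^2 / (2 * v)) * (y - μ)^2) μ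
  simp only [add_sub_cancel_right] at hshift
  calc ∫ y, gaussianPDFReal μ v.toNNReal y * (y - μ) ^ 2
      = ∫ y, (Real.sqrt (2 * π * v))⁻¹ * Real.exp (-(y - μ)^2 / (2 * v)) * (y - μ)^2 := by
        simp_rw [gaussianPDFReal, hcoe]
    _ = ∫ x, (Real.sqrt (2 * π * v))⁻¹ * Real.exp (-x^2 / (2 * v)) * x^2 := hshift.symm
    _ = (Real.sqrt (2 * π * v))⁻¹ * ∫ x, x^2 * Real.exp (-(1/(2*v)) * x^2) := by
        rw [← MeasureTheory.integral_const_mul]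
        congr 1; ext x
        rw [mul_assoc, mul_comm (Real.exp _) (x^2)]
        congr 3
        field_simp
    _ = v := by
        rw [my_integral_sq_mul_exp (by positivity : (0:ℝ) < 1/(2*v))]
        have h1 : π / (1/(2*v)) = 2 * π * v := by field_simp
        have h2 : Real.sqrt (π / (1/(2*v))) / (2 * (1/(2*v))) = Real.sqrt (2 * π * v) * v := by
          rw [h1]; field_simp
        rw [h2, ← mul_assoc, inv_mul_cancel₀ hS, one_mul]

lemma my_integrable_sub_sq (μ : ℝ) {v : ℝ} (hv : 0 < v) :
    Integrable (fun y => (y - μ) ^ 2) (gaussianReal μ v.toNNReal) := by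
  have hv' : v.toNNReal ≠ 0 := by
    simp only [ne_eq, Real.toNNReal_eq_zero, not_le]; exact hv
  rw [gaussianReal_of_var_ne_zero _ hv', gaussianPDF_def]
  have h : ∀ x : ℝ, ENNReal.ofReal (gaussianPDFReal μ v.toNNReal x)
      = ((gaussianPDFReal μ v.toNNReal x).toNNReal : ℝ≥0∞) := fun _ => rfl
  simp_rw [h]
  rw [integrable_withDensity_iff_integrable_coe_smul
    (measurable_gaussianPDFReal μ v.toNNReal).real_toNNReal]
  have hcoe : ((v.toNNReal : ℝ)) = v := Real.coe_toNNReal _ hv.le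
  have hb : (0:ℝ) < 1/(2*v) := by positivity
  have base : Integrable (fun x : ℝ => x ^ 2 * Real.exp (-(1/(2*v)) * x ^ 2)) :=
    my_integrable_sq_mul_exp hb
  have shifted : Integrable (fun y : ℝ => (y - μ) ^ 2 * Real.exp (-(1/(2*v)) * (y - μ) ^ 2)) :=
    base.comp_sub_right μ
  have := shifted.const_mul ((Real.sqrt (2 * π * v))⁻¹)
  apply this.congr
  filter_upwards with y
  simp only [NNReal.smul_def, smul_eq_mul]
  rw [Real.coe_toNNReal _ (gaussianPDFReal_nonneg _ _ _)]
  simp_rw [gaussianPDFReal, hcoe]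
  rw [show -(y - μ)^2 / (2*v) = -(1/(2*v)) * (y - μ)^2 by field_simp]
  ring

/-- The expected KL divergence from the Gaussian posterior `N(μ⁺(y), σ₊²)` to the
prior `N(μ, σ²)`, averaged over `y ~ N(μ, S)` with `S = σ² + σₙ²`, `K = σ²/S`,
`σ₊² = σ²σₙ²/S`, `μ⁺(y) = μ + K(y − μ)`, equals `(1/2)·log(1 + σ²/σₙ²)`. -/
theorem efe_epistemic_term (μ σ σₙ : ℝ) (hσ : 0 < σ) (hσₙ : 0 < σₙ) :
    ∫ y, (1 / 2) *
          ((σ ^ 2 * σₙ ^ 2 / (σ ^ 2 + σₙ ^ 2)) / σ ^ 2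
            + ((μ + (σ ^ 2 / (σ ^ 2 + σₙ ^ 2)) * (y - μ)) - μ) ^ 2 / σ ^ 2
            - 1
            + Real.log (σ ^ 2 / (σ ^ 2 * σₙ ^ 2 / (σ ^ 2 + σₙ ^ 2))))
        ∂(gaussianReal μ (σ ^ 2 + σₙ ^ 2).toNNReal)
      = (1 / 2) * Real.log (1 + σ ^ 2 / σₙ ^ 2) := by
  have hV : (0:ℝ) < σ ^ 2 + σₙ ^ 2 := by positivity
  set c₁ : ℝ := (1/2) * ((σ ^ 2 * σₙ ^ 2 / (σ ^ 2 + σₙ ^ 2)) / σ ^ 2 - 1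
      + Real.log (σ ^ 2 / (σ ^ 2 * σₙ ^ 2 / (σ ^ 2 + σₙ ^ 2)))) with hc₁
  set c₂ : ℝ := (1/2) * (σ ^ 2 / (σ ^ 2 + σₙ ^ 2)) ^ 2 / σ ^ 2 with hc₂
  have hrw : ∀ y : ℝ, (1 / 2) *
          ((σ ^ 2 * σₙ ^ 2 / (σ ^ 2 + σₙ ^ 2)) / σ ^ 2
            + ((μ + (σ ^ 2 / (σ ^ 2 + σₙ ^ 2)) * (y - μ)) - μ) ^ 2 / σ ^ 2
            - 1
            + Real.log (σ ^ 2 / (σ ^ 2 * σₙ ^ 2 / (σ ^ 2 + σₙ ^ 2))))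
      = c₁ + c₂ * (y - μ) ^ 2 := by
    intro y
    rw [hc₁, hc₂]
    ring
  simp_rw [hrw]
  rw [integral_add (integrable_const _) ((my_integrable_sub_sq μ hV).const_mul c₂),
    integral_const, integral_const_mul, my_integral_sub_sq μ hV]
  simp only [measure_univ, probReal_univ, ENNReal.toReal_one, smul_eq_mul, one_mul]
  have hlog : Real.log (σ ^ 2 / (σ ^ 2 * σₙ ^ 2 / (σ ^ 2 + σₙ ^ 2)))
      = Real.log (1 + σ ^ 2 / σₙ ^ 2) := by
    congr 1
    field_simp
    ring
  rw [hc₁, hc₂, hlog]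
  field_simp
  ring
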